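/- Summing the N−2 triangle inequalities obtained from triangulating a chordless cycle of length N yields the cyclic inequality: if a symmetric matrix M satisfies |M_{ij} + M_{jk}| ≤ 1 + M_{ik} for all triples i,j,k among the cycle's vertices, then for every odd subset F of the cycle's edge set C, M(F) − M(C∖F) ≥ 2 − |C|. -/

import Mathlib

open Fin.NatCast

lemma key_sign_triangle {a b c α β : ℝ} (hα : α * α = 1) (hβ : β * β = 1)
    (h1 : |a + b| ≤ 1 + c) (h2 : |c + b| ≤ 1 + a) (h3 : |a + c| ≤ 1 + b) :
    α * a + β * b ≥ -(α * β) * c - 1 := by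
  rw [abs_le] at h1 h2 h3
  rcases mul_self_eq_one_iff.mp hα with h | h <;>
    rcases mul_self_eq_one_iff.mp hβ with h' | h' <;> subst h h' <;> nlinarith

theorem triangle_conditions_imply_cyclic_inequality {n N : ℕ} (hN : 3 ≤ N)
    (M : Matrix (Fin n) (Fin n) ℝ)
    (hsymm : M.IsSymm) (hdiag : ∀ i, M i i = 1) (hbd : ∀ i j, |M i j| ≤ 1)
    (v : Fin N → Fin n) (hv : Function.Injective v)
    (htri : ∀ i j k : Fin N,
      |M (v i) (v j) + M (v j) (v k)| ≤ 1 + M (v i) (v k))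
    (F : Finset (Fin N)) (hF : Odd F.card) :
    (∑ i ∈ F, M (v i) (v (finRotate N i)))
      - ∑ i ∈ Fᶜ, M (v i) (v (finRotate N i)) ≥ 2 - (N : ℝ) := by
  haveI : NeZero N := ⟨by omega⟩
  have hsym : ∀ i j : Fin N, M (v i) (v j) = M (v j) (v i) := fun i j =>
    (hsymm.apply (v j) (v i))
  set x : Fin N → ℝ := fun i => M (v i) (v (finRotate N i)) with hx
  set ε : Fin N → ℝ := fun i => if i ∈ F then 1 else -1 with hε
  have hεsq : ∀ i, ε i * ε i = 1 := by
    intro i; simp only [hε]; split <;> norm_num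
  -- sign of partial products
  set s : ℕ → ℝ := fun k => (-1) ^ (k - 1) * ∏ i ∈ Finset.range k, ε (i : Fin N) with hs
  have hssq : ∀ k, s k * s k = 1 := by
    intro k
    simp only [hs]
    have : (∏ i ∈ Finset.range k, ε (i : Fin N)) * ∏ i ∈ Finset.range k, ε (i : Fin N) = 1 := by
      rw [← Finset.prod_mul_distrib]
      exact Finset.prod_congr rfl (fun i _ => hεsq _) |>.trans (Finset.prod_const_one)
    have h2 : ((-1 : ℝ) ^ (k - 1)) * ((-1 : ℝ) ^ (k - 1)) = 1 := by
      rw [← pow_add, ← two_mul, pow_mul]; norm_num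
    nlinarith [this, h2]
  -- rotation lemma
  have hrot : ∀ k : ℕ, k + 1 < N → finRotate N ((k : Fin N)) = ((k + 1 : ℕ) : Fin N) := by
    intro k hk
    obtain ⟨m, rfl⟩ : ∃ m, N = m + 1 := ⟨N - 1, by omega⟩
    rw [finRotate_succ_apply]
    push_cast
    ring
  -- main induction claim
  have main : ∀ k : ℕ, 1 ≤ k → k < N →
      (∑ i ∈ Finset.range k, ε (i : Fin N) * x (i : Fin N)) ≥
        s k * M (v 0) (v (k : Fin N)) - ((k : ℝ) - 1) := by
    intro k hk1 hkN
    induction k with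
    | zero => omega
    | succ k ih =>
      rcases Nat.eq_or_lt_of_le hk1 with h1 | h1
      · -- base case k+1 = 1
        have hk0 : k = 0 := by omega
        subst hk0
        have h01 : finRotate N ((0 : ℕ) : Fin N) = ((1 : ℕ) : Fin N) := hrot 0 (by omega)
        have hx0 : x ((0 : ℕ) : Fin N) = M (v 0) (v ((1 : ℕ) : Fin N)) := by
          rw [hx]; simp only []; rw [h01]; norm_num
        simp only [hs, Finset.sum_range_succ, Finset.sum_range_zero, Finset.prod_range_succ,
          Finset.prod_range_zero, zero_add, one_mul, pow_zero, Nat.cast_zero, Nat.cast_one,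
          Nat.add_sub_cancel, Nat.sub_self, hx0]
        simp only [Nat.cast_zero, Nat.cast_one] at hx0
        rw [hx0]
        norm_num
      · -- inductive step, k ≥ 1
        have hk1' : 1 ≤ k := by omega
        have hkN' : k < N := by omega
        have IH := ih hk1' hkN'
        rw [Finset.sum_range_succ]
        set a : ℝ := M (v 0) (v (k : Fin N)) with ha
        set b : ℝ := M (v (k : Fin N)) (v ((k + 1 : ℕ) : Fin N)) with hb
        set c : ℝ := M (v 0) (v ((k + 1 : ℕ) : Fin N)) with hc
        have hxk : x ((k : ℕ) : Fin N) = b := by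
          rw [hx]; simp only []; rw [hrot k (by omega)]
        have h1t : |a + b| ≤ 1 + c := htri 0 _ _
        have h2t : |c + b| ≤ 1 + a := by
          have := htri 0 ((k + 1 : ℕ) : Fin N) ((k : ℕ) : Fin N)
          rwa [hsym ((k + 1 : ℕ) : Fin N) ((k : ℕ) : Fin N)] at this
        have h3t : |a + c| ≤ 1 + b := by
          have := htri ((k : ℕ) : Fin N) 0 ((k + 1 : ℕ) : Fin N)
          rwa [hsym ((k : ℕ) : Fin N) 0] at this
        have hkey := key_sign_triangle (hssq k) (hεsq ((k : ℕ) : Fin N)) h1t h2t h3t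
        have hpow : (-1 : ℝ) ^ k = -((-1 : ℝ) ^ (k - 1)) := by
          have hk2 : k - 1 + 1 = k := by omega
          calc (-1 : ℝ) ^ k = (-1 : ℝ) ^ (k - 1 + 1) := by rw [hk2]
            _ = -((-1 : ℝ) ^ (k - 1)) := by rw [pow_succ]; ring
        have hsnext : s (k + 1) = -(s k * ε ((k : ℕ) : Fin N)) := by
          simp only [hs, Nat.add_sub_cancel, Finset.prod_range_succ, hpow]
          ring
        rw [hxk, hsnext]
        push_cast
        nlinarith [hkey, IH]
  -- evaluate at k = N - 1
  have hN1 : (1 : ℕ) ≤ N - 1 := by omega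
  have hfinal := main (N - 1) hN1 (by omega)
  -- the last edge
  have hlast_rot : finRotate N (((N - 1 : ℕ) : Fin N)) = 0 := by
    obtain ⟨m, rfl⟩ : ∃ m, N = m + 1 := ⟨N - 1, by omega⟩
    have hm : ((m + 1 - 1 : ℕ) : Fin (m + 1)) = Fin.last m := by
      simp [Fin.natCast_eq_last]
    rw [hm, finRotate_last]
  have hxlast : x (((N - 1 : ℕ) : Fin N)) = M (v 0) (v (((N - 1 : ℕ) : Fin N))) := by
    rw [hx]; simp only []; rw [hlast_rot, hsym]
  -- sign computation at N - 1
  have hprodF : (∏ i : Fin N, ε i) = (-1 : ℝ) ^ (N - F.card) := by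
    rw [← Finset.prod_mul_prod_compl F (fun i => ε i)]
    have h1 : (∏ i ∈ F, ε i) = 1 := Finset.prod_eq_one (fun i hi => by simp [hε, hi])
    have h2 : (∏ i ∈ Fᶜ, ε i) = (-1 : ℝ) ^ (Fᶜ.card) :=
      (Finset.prod_congr rfl (fun i hi => by
        simp only [hε]; rw [if_neg (by simpa using (Finset.mem_compl.mp hi))])).trans
        (Finset.prod_const _)
    rw [h1, h2, one_mul, Finset.card_compl, Fintype.card_fin]
  have hprod_range : (∏ i ∈ Finset.range N, ε (i : Fin N)) = (-1 : ℝ) ^ (N - F.card) := by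
    rw [← Fin.prod_univ_eq_prod_range (fun i => ε ((i : ℕ) : Fin N)) N, ← hprodF]
    exact Finset.prod_congr rfl (fun i _ => by rw [Fin.cast_val_eq_self])
  have hcardle : F.card ≤ N := by
    simpa using Finset.card_le_univ F
  have hsign : s (N - 1) * ε (((N - 1 : ℕ) : Fin N)) = -1 := by
    have hrs : (∏ i ∈ Finset.range (N - 1), ε (i : Fin N)) * ε (((N - 1 : ℕ) : Fin N))
        = (-1 : ℝ) ^ (N - F.card) := by
      have hrange : Finset.range N = Finset.range (N - 1 + 1) :=
        congrArg Finset.range (by omega)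
      rw [← hprod_range, hrange, Finset.prod_range_succ]
    simp only [hs]
    rw [mul_assoc, hrs, ← pow_add]
    have hodd : Odd (N - 1 - 1 + (N - F.card)) := by
      obtain ⟨a, ha⟩ := hF
      exact ⟨N - a - 2, by omega⟩
    exact Odd.neg_one_pow hodd
  -- sum over all edges
  have hsplit : (∑ i ∈ F, x i) - ∑ i ∈ Fᶜ, x i = ∑ i : Fin N, ε i * x i := by
    rw [← Finset.sum_add_sum_compl F (fun i => ε i * x i)]
    have h1 : (∑ i ∈ F, ε i * x i) = ∑ i ∈ F, x i :=
      Finset.sum_congr rfl (fun i hi => by simp [hε, hi])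
    have h2 : (∑ i ∈ Fᶜ, ε i * x i) = ∑ i ∈ Fᶜ, (- x i) :=
      Finset.sum_congr rfl (fun i hi => by
        simp only [hε]; rw [if_neg (by simpa using (Finset.mem_compl.mp hi))]; ring)
    rw [h1, h2, Finset.sum_neg_distrib]
    ring
  have hsum_range : (∑ i : Fin N, ε i * x i) = ∑ i ∈ Finset.range N, ε (i : Fin N) * x (i : Fin N) := by
    rw [← Fin.sum_univ_eq_sum_range (fun i => ε ((i : ℕ) : Fin N) * x ((i : ℕ) : Fin N)) N]
    exact Finset.sum_congr rfl (fun i _ => by rw [Fin.cast_val_eq_self])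
  have hsplit_last : (∑ i ∈ Finset.range N, ε (i : Fin N) * x (i : Fin N))
      = (∑ i ∈ Finset.range (N - 1), ε (i : Fin N) * x (i : Fin N))
        + ε (((N - 1 : ℕ) : Fin N)) * x (((N - 1 : ℕ) : Fin N)) := by
    have hrange : Finset.range N = Finset.range (N - 1 + 1) :=
      congrArg Finset.range (by omega)
    rw [hrange, Finset.sum_range_succ]
  show (∑ i ∈ F, x i) - ∑ i ∈ Fᶜ, x i ≥ 2 - (N : ℝ)
  rw [hsplit, hsum_range, hsplit_last]
  have hc := hbd (v 0) (v (((N - 1 : ℕ) : Fin N)))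
  set c := M (v 0) (v (((N - 1 : ℕ) : Fin N))) with hcdef
  rw [hxlast]
  have hεsq' := hεsq (((N - 1 : ℕ) : Fin N))
  have hε2 : ε (((N - 1 : ℕ) : Fin N)) = - s (N - 1) := by
    have hs2 := hssq (N - 1)
    nlinarith [hsign, hs2, hεsq']
  have hcast : ((N - 1 : ℕ) : ℝ) = (N : ℝ) - 1 := by
    have : (1 : ℕ) ≤ N := by omega
    push_cast [Nat.cast_sub this]
    ring
  rw [hε2]
  rw [hcast] at hfinal
  linarith [hfinal]
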